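/- For every ρ > 0, the function g_ρ(x₂) = F(x₂ tan θ)^ρ satisfies the closed-form evaluation R(g_ρ) = α^{-2ρ} · tan θ · (ρ − cot²θ) · (2^{2ρ} − 1) / (2ρ + 1). In particular, for ρ = cos²θ one has R(g_{cos²θ}) = −α^{-2cos²θ} · cos³θ (2^{2cos²θ} − 1) / ( sin θ (1 + 2cos²θ) ). -/

import Mathlib

open Real MeasureTheory Set Filter
open Topology

/-- `F α t = ∫_{-∞}^t e^{-α|x|} dx`. -/
noncomputable def F (α t : ℝ) : ℝ := ∫ x in Iio t, exp (-α * |x|)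

/-- The half-plane-like domain `Ω = {(x₁,x₂) : x₁ < x₂ tan θ}`. -/
def Omg (θ : ℝ) : Set (ℝ × ℝ) := {p | p.1 < p.2 * tan θ}

/-- The functional `R(g) = ∫ g'·(g'·F(x tanθ) − g·e^{-α|x|tanθ}·cot θ) dx`. -/
noncomputable def Rfun (α θ : ℝ) (g : ℝ → ℝ) : ℝ :=
  ∫ x : ℝ, deriv g x *
    (deriv g x * F α (x * tan θ) - g x * exp (-α * |x| * tan θ) * cot θ)

/-- The quantity `Λ(θ)` from the upper bound for the lowest eigenvalue. -/
noncomputable def Lam (θ : ℝ) : ℝ :=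
  3 * cos θ ^ 6 * ((2:ℝ) ^ (2 * cos θ ^ 2) - 1) ^ 2 /
    (2 * (1 + 2 * cos θ ^ 2) ^ 3 *
      (108 + 180 * cos θ ^ 2 - 132 * cos θ ^ 4 + 45 * cos θ ^ 6 - 5 * cos θ ^ 8))

lemma expRpow (t c : ℝ) : exp t ^ c = exp (t * c) := by
  rw [Real.rpow_def_of_pos (exp_pos t), log_exp]

lemma integrableOn_exp_mul_Iic' {c : ℝ} (hc : 0 < c) (a : ℝ) :
    IntegrableOn (fun x : ℝ => exp (c * x)) (Iic a) := by
  have A : MeasurableEmbedding (fun x : ℝ => -x) :=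
    (Homeomorph.neg ℝ).isClosedEmbedding.measurableEmbedding
  have h : IntegrableOn (fun x : ℝ => exp (-c * x)) (Ici (-a)) := by
    rw [integrableOn_Ici_iff_integrableOn_Ioi]
    exact exp_neg_integrableOn_Ioi _ hc
  have key : IntegrableOn ((fun x : ℝ => exp (c * x)) ∘ (fun x : ℝ => -x)) (Ici (-a)) := by
    apply h.congr_fun _ measurableSet_Ici
    intro x _
    simp [Function.comp, mul_neg, neg_mul]
  have hmap : (volume : Measure ℝ).restrict (Iic a)
      = ((volume : Measure ℝ).restrict (Ici (-a))).map (fun x : ℝ => -x) := by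
    have hpre : (fun x : ℝ => -x) ⁻¹' (Iic a) = Ici (-a) := by
      ext y; simp [neg_le]
    rw [← hpre, ← Measure.restrict_map A.measurable measurableSet_Iic,
      Measure.map_neg_eq_self]
  rw [IntegrableOn, hmap, A.integrable_map_iff]
  exact key

lemma integral_exp_mul_Iic' {c : ℝ} (hc : 0 < c) (a : ℝ) :
    ∫ x in Iic a, exp (c * x) = exp (c * a) / c := by
  have hderiv : ∀ x ∈ Iic a, HasDerivAt (fun y : ℝ => exp (c * y) / c) (exp (c * x)) x := by
    intro x _
    have h1 : HasDerivAt (fun y : ℝ => c * y) c x := by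
      simpa using (hasDerivAt_id x).const_mul c
    have h2 := (h1.exp).div_const c
    simpa [mul_div_cancel_right₀ _ hc.ne'] using h2
  have htd : Tendsto (fun y : ℝ => exp (c * y) / c) atBot (𝓝 0) := by
    have h0 : Tendsto (fun y : ℝ => c * y) atBot atBot :=
      (tendsto_const_mul_atBot_of_pos hc).mpr tendsto_id
    have := (tendsto_exp_atBot.comp h0).div_const c
    simpa using this
  have := integral_Iic_of_hasDerivAt_of_tendsto' hderiv (integrableOn_exp_mul_Iic' hc a) htd
  simpa using this

lemma integrable_exp_neg_mul_abs' {b : ℝ} (hb : 0 < b) :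
    Integrable (fun x : ℝ => exp (-b * |x|)) := by
  have h1 : IntegrableOn (fun x : ℝ => exp (-b * |x|)) (Iic 0) := by
    apply (integrableOn_exp_mul_Iic' hb 0).congr_fun _ measurableSet_Iic
    intro x hx
    simp only [mem_Iic] at hx
    show exp (b * x) = exp (-b * |x|)
    rw [abs_of_nonpos hx]; ring_nf
  have h2 : IntegrableOn (fun x : ℝ => exp (-b * |x|)) (Ioi 0) := by
    apply (exp_neg_integrableOn_Ioi 0 hb).congr_fun _ measurableSet_Ioi
    intro x hx
    simp only [mem_Ioi] at hx
    show exp (-b * x) = exp (-b * |x|)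
    rw [abs_of_pos hx]
  rw [← integrableOn_univ, ← Iic_union_Ioi (a := (0:ℝ))]
  exact h1.union h2


lemma F_sub {α : ℝ} (hα : 0 < α) (s t : ℝ) :
    F α t - F α s = ∫ x in s..t, exp (-α * |x|) := by
  have h := integrable_exp_neg_mul_abs' hα
  rw [F, F, ← integral_Iic_eq_integral_Iio, ← integral_Iic_eq_integral_Iio]
  exact intervalIntegral.integral_Iic_sub_Iic h.integrableOn h.integrableOn

lemma F_hasDerivAt {α : ℝ} (hα : 0 < α) (t : ℝ) :
    HasDerivAt (F α) (exp (-α * |t|)) t := by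
  have hcont : Continuous fun x : ℝ => exp (-α * |x|) := by fun_prop
  have key : HasDerivAt (fun u : ℝ => F α 0 + ∫ x in (0:ℝ)..u, exp (-α * |x|))
      (exp (-α * |t|)) t := by
    apply HasDerivAt.const_add
    exact intervalIntegral.integral_hasDerivAt_right
      ((integrable_exp_neg_mul_abs' hα).intervalIntegrable)
      (hcont.stronglyMeasurableAtFilter _ _) hcont.continuousAt
  have heq : (fun u : ℝ => F α 0 + ∫ x in (0:ℝ)..u, exp (-α * |x|)) = F α := by
    funext u; rw [← F_sub hα 0 u]; ring
  rwa [heq] at key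

lemma F_of_nonpos {α : ℝ} (hα : 0 < α) {t : ℝ} (ht : t ≤ 0) :
    F α t = exp (α * t) / α := by
  rw [F, setIntegral_congr_fun measurableSet_Iio (g := fun x => exp (α * x)) ?_]
  · rw [← integral_Iic_eq_integral_Iio]
    exact integral_exp_mul_Iic' hα t
  · intro x hx
    simp only [mem_Iio] at hx
    have hx0 : x ≤ 0 := le_of_lt (lt_of_lt_of_le hx ht)
    show exp (-α * |x|) = exp (α * x)
    rw [abs_of_nonpos hx0]; ring_nf

lemma F_of_nonneg {α : ℝ} (hα : 0 < α) {t : ℝ} (ht : 0 ≤ t) :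
    F α t = (2 - exp (-(α * t))) / α := by
  have h := F_sub hα 0 t
  have h2 : (∫ x in (0:ℝ)..t, exp (-α * |x|)) = ∫ x in (0:ℝ)..t, exp (-α * x) := by
    apply intervalIntegral.integral_congr
    intro x hx
    rw [uIcc_of_le ht] at hx
    show exp (-α * |x|) = exp (-α * x)
    rw [abs_of_nonneg hx.1]
  have h3 : (∫ x in (0:ℝ)..t, exp (-α * x)) = (1 - exp (-(α * t))) / α := by
    have h4 := intervalIntegral.integral_comp_mul_left (a := (0:ℝ)) (b := t)
      (f := fun x => exp x) (c := -α) (neg_ne_zero.mpr hα.ne')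
    simp only [integral_exp, mul_zero, exp_zero, smul_eq_mul] at h4
    rw [h4, inv_neg, div_eq_mul_inv]
    ring_nf
  have h0 : F α 0 = 1 / α := by
    rw [F_of_nonpos hα le_rfl]; simp
  have := h.symm
  rw [h2, h3, h0] at h
  have : F α t = 1 / α + (1 - exp (-(α * t))) / α := by linarith
  rw [this]; ring

lemma F_pos {α : ℝ} (hα : 0 < α) (t : ℝ) : 0 < F α t := by
  rcases le_or_gt t 0 with ht | ht
  · rw [F_of_nonpos hα ht]; positivity
  · rw [F_of_nonneg hα ht.le]
    have h1 : exp (-(α * t)) ≤ 1 := exp_le_one_iff.mpr (by nlinarith)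
    have h2 : 0 < 2 - exp (-(α * t)) := by linarith
    positivity

lemma b_hasDerivAt (α : ℝ) (x : ℝ) :
    HasDerivAt (fun x : ℝ => 2 - exp (-(α * x))) (α * exp (-(α * x))) x := by
  have h1 : HasDerivAt (fun x : ℝ => -(α * x)) (-α) x := by
    simpa using (hasDerivAt_neg x).const_mul α
  have h2 := h1.exp
  have h3 := h2.const_sub 2
  simpa [neg_mul, mul_comm] using h3

lemma b_bounds {α x : ℝ} (hα : 0 < α) (hx : 0 ≤ x) :
    1 ≤ 2 - exp (-(α * x)) ∧ 2 - exp (-(α * x)) ≤ 2 := by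
  have h1 : exp (-(α * x)) ≤ 1 := exp_le_one_iff.mpr (by nlinarith)
  have h2 : 0 < exp (-(α * x)) := exp_pos _
  constructor <;> linarith

lemma H_hasDerivAt {α ρ : ℝ} (hα : 0 < α) (hρ : 0 < ρ) {x : ℝ} (hx : 0 ≤ x) :
    HasDerivAt (fun x : ℝ => (2 - exp (-(α * x))) ^ (2*ρ) / (ρ * α)
        - (2 - exp (-(α * x))) ^ (2*ρ+1) / (α * (2*ρ+1)))
      ((2 - exp (-(α * x))) ^ (2*ρ-1) * exp (-(2 * α * x))) x := by
  have hb := (b_bounds hα hx).1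
  have hbpos : (0:ℝ) < 2 - exp (-(α * x)) := by linarith
  have h1 := ((b_hasDerivAt α x).rpow_const (p := 2*ρ) (Or.inl hbpos.ne')).div_const (ρ * α)
  have h2 := ((b_hasDerivAt α x).rpow_const (p := 2*ρ+1) (Or.inl hbpos.ne')).div_const (α * (2*ρ+1))
  have h3 := h1.sub h2
  refine h3.congr_deriv ?_
  have e1 : (2*ρ+1-1 : ℝ) = 2*ρ := by ring
  have e2 : (2 - exp (-(α * x))) ^ (2*ρ) = (2 - exp (-(α * x))) ^ (2*ρ-1) * (2 - exp (-(α * x))) := by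
    rw [← Real.rpow_add_one hbpos.ne']; ring_nf
  have e3 : exp (-(2 * α * x)) = exp (-(α * x)) * exp (-(α * x)) := by
    rw [← exp_add]; ring_nf
  rw [e1, e2, e3]
  have h2ρ1 : (2*ρ+1 : ℝ) ≠ 0 := by positivity
  field_simp
  ring

lemma integrableOn_pos_side {α ρ : ℝ} (hα : 0 < α) (_hρ : 0 < ρ) :
    IntegrableOn (fun x : ℝ => (2 - exp (-(α * x))) ^ (2*ρ-1) * exp (-(2 * α * x))) (Ioi 0) := by
  set C : ℝ := (2:ℝ) ^ (2*ρ-1) + 1 with hC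
  have hmain : IntegrableOn (fun x : ℝ => C * exp (-(2*α) * x)) (Ioi 0) :=
    (exp_neg_integrableOn_Ioi 0 (by positivity)).const_mul C
  apply Integrable.mono' hmain
  · apply ContinuousOn.aestronglyMeasurable _ measurableSet_Ioi
    apply ContinuousOn.mul
    · apply ContinuousOn.rpow_const
      · fun_prop
      · intro x hx
        simp only [mem_Ioi] at hx
        exact Or.inl (by nlinarith [(b_bounds hα hx.le).1])
    · fun_prop
  · rw [ae_restrict_iff' measurableSet_Ioi]
    filter_upwards with x
    intro hx
    simp only [mem_Ioi] at hx
    obtain ⟨hb1, hb2⟩ := b_bounds hα hx.le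
    have hbpos : (0:ℝ) < 2 - exp (-(α * x)) := by linarith
    have hrpow_nonneg : 0 ≤ (2 - exp (-(α * x))) ^ (2*ρ-1) := Real.rpow_nonneg hbpos.le _
    have hbound : (2 - exp (-(α * x))) ^ (2*ρ-1) ≤ C := by
      rcases le_total 0 (2*ρ-1) with he | he
      · have := Real.rpow_le_rpow hbpos.le hb2 he
        have h2pos : (0:ℝ) < (2:ℝ) ^ (2*ρ-1) := by positivity
        rw [hC]; linarith
      · have := Real.rpow_le_one_of_one_le_of_nonpos hb1 he
        have h2pos : (0:ℝ) ≤ (2:ℝ) ^ (2*ρ-1) := by positivity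
        rw [hC]; linarith
    rw [norm_mul, norm_of_nonneg hrpow_nonneg, norm_of_nonneg (exp_pos _).le]
    have he : exp (-(2 * α * x)) = exp (-(2*α) * x) := by ring_nf
    rw [he]
    exact mul_le_mul_of_nonneg_right hbound (exp_pos _).le

lemma integral_pos_side {α ρ : ℝ} (hα : 0 < α) (hρ : 0 < ρ) :
    ∫ x in Ioi (0:ℝ), (2 - exp (-(α * x))) ^ (2*ρ-1) * exp (-(2 * α * x))
      = ((2:ℝ) ^ (2*ρ) / (ρ * α) - (2:ℝ) ^ (2*ρ+1) / (α * (2*ρ+1)))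
        - (1 / (ρ * α) - 1 / (α * (2*ρ+1))) := by
  have hderiv : ∀ x ∈ Ici (0:ℝ), HasDerivAt (fun x : ℝ => (2 - exp (-(α * x))) ^ (2*ρ) / (ρ * α)
        - (2 - exp (-(α * x))) ^ (2*ρ+1) / (α * (2*ρ+1)))
      ((2 - exp (-(α * x))) ^ (2*ρ-1) * exp (-(2 * α * x))) x := fun x hx =>
    H_hasDerivAt hα hρ hx
  have hv : Tendsto (fun x : ℝ => exp (-(α * x))) atTop (𝓝 0) := by
    apply tendsto_exp_atBot.comp
    have : Tendsto (fun x : ℝ => α * x) atTop atTop :=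
      (tendsto_const_mul_atTop_of_pos hα).mpr tendsto_id
    exact tendsto_neg_atTop_atBot.comp this
  have hb_tend : Tendsto (fun x : ℝ => 2 - exp (-(α * x))) atTop (𝓝 2) := by
    have := (tendsto_const_nhds (x := (2:ℝ)) (f := atTop)).sub hv
    simpa using this
  have htd : Tendsto (fun x : ℝ => (2 - exp (-(α * x))) ^ (2*ρ) / (ρ * α)
        - (2 - exp (-(α * x))) ^ (2*ρ+1) / (α * (2*ρ+1))) atTop
      (𝓝 ((2:ℝ) ^ (2*ρ) / (ρ * α) - (2:ℝ) ^ (2*ρ+1) / (α * (2*ρ+1)))) := by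
    exact ((hb_tend.rpow_const (Or.inl two_ne_zero)).div_const _).sub
      ((hb_tend.rpow_const (Or.inl two_ne_zero)).div_const _)
  have := integral_Ioi_of_hasDerivAt_of_tendsto' hderiv (integrableOn_pos_side hα hρ) htd
  rw [this]
  norm_num

lemma J_integrand_neg {α ρ : ℝ} (hα : 0 < α) {x : ℝ} (hx : x ≤ 0) :
    F α x ^ (2*ρ-1) * exp (-(2*α) * |x|)
      = α ^ (-(2*ρ-1)) * exp (((2*ρ+1) * α) * x) := by
  rw [F_of_nonpos hα hx, abs_of_nonpos hx,
    Real.div_rpow (exp_pos _).le hα.le, expRpow, Real.rpow_neg hα.le]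
  rw [div_eq_mul_inv, mul_right_comm]
  have h2 : exp (α * x * (2*ρ-1)) * exp (-(2*α) * -x) = exp (((2*ρ+1) * α) * x) := by
    rw [← exp_add]; congr 1; ring
  rw [h2, mul_comm]

lemma J_integrand_pos {α ρ : ℝ} (hα : 0 < α) {x : ℝ} (hx : 0 ≤ x) :
    F α x ^ (2*ρ-1) * exp (-(2*α) * |x|)
      = α ^ (-(2*ρ-1)) * ((2 - exp (-(α * x))) ^ (2*ρ-1) * exp (-(2 * α * x))) := by
  have hb1 := (b_bounds hα hx).1
  rw [F_of_nonneg hα hx, abs_of_nonneg hx,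
    Real.div_rpow (by linarith) hα.le, Real.rpow_neg hα.le]
  rw [show -(2*α) * x = -(2 * α * x) by ring]
  rw [div_eq_mul_inv]
  ring

lemma integrableOn_neg_side {α ρ : ℝ} (hα : 0 < α) (hρ : 0 < ρ) :
    IntegrableOn (fun x : ℝ => F α x ^ (2*ρ-1) * exp (-(2*α) * |x|)) (Iio 0) := by
  have h0 : IntegrableOn (fun x : ℝ => α ^ (-(2*ρ-1)) * exp (((2*ρ+1) * α) * x)) (Iic 0) :=
    (integrableOn_exp_mul_Iic' (by positivity : (0:ℝ) < (2*ρ+1) * α) 0).const_mul _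
  have h : IntegrableOn (fun x : ℝ => α ^ (-(2*ρ-1)) * exp (((2*ρ+1) * α) * x)) (Iio 0) :=
    h0.mono_set Iio_subset_Iic_self
  apply h.congr_fun _ measurableSet_Iio
  intro x hx
  simp only [mem_Iio] at hx
  exact (J_integrand_neg hα hx.le).symm

lemma integrableOn_pos_side' {α ρ : ℝ} (hα : 0 < α) (hρ : 0 < ρ) :
    IntegrableOn (fun x : ℝ => F α x ^ (2*ρ-1) * exp (-(2*α) * |x|)) (Ici 0) := by
  rw [integrableOn_Ici_iff_integrableOn_Ioi]
  have h0 : IntegrableOn (fun x : ℝ => α ^ (-(2*ρ-1)) *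
      ((2 - exp (-(α * x))) ^ (2*ρ-1) * exp (-(2 * α * x)))) (Ioi 0) :=
    (integrableOn_pos_side hα hρ).const_mul (α ^ (-(2*ρ-1)))
  apply h0.congr_fun _ measurableSet_Ioi
  intro x hx
  simp only [mem_Ioi] at hx
  exact (J_integrand_pos hα hx.le).symm

lemma J_eval {α ρ : ℝ} (hα : 0 < α) (hρ : 0 < ρ) :
    ∫ x : ℝ, F α x ^ (2*ρ-1) * exp (-(2*α) * |x|)
      = α ^ (-(2*ρ)) * ((2:ℝ) ^ (2*ρ) - 1) / (ρ * (2*ρ+1)) := by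
  rw [← intervalIntegral.integral_Iio_add_Ici (integrableOn_neg_side hα hρ) (integrableOn_pos_side' hα hρ)]
  have hneg : ∫ x in Iio (0:ℝ), F α x ^ (2*ρ-1) * exp (-(2*α) * |x|)
      = α ^ (-(2*ρ-1)) * (1 / ((2*ρ+1) * α)) := by
    rw [setIntegral_congr_fun measurableSet_Iio
      (g := fun x : ℝ => α ^ (-(2*ρ-1)) * exp (((2*ρ+1) * α) * x))
      (fun x hx => J_integrand_neg hα (le_of_lt hx))]
    rw [← integral_Iic_eq_integral_Iio, integral_const_mul,
      integral_exp_mul_Iic' (by positivity) 0]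
    simp
  have hpos : ∫ x in Ici (0:ℝ), F α x ^ (2*ρ-1) * exp (-(2*α) * |x|)
      = α ^ (-(2*ρ-1)) * (((2:ℝ) ^ (2*ρ) / (ρ * α) - (2:ℝ) ^ (2*ρ+1) / (α * (2*ρ+1)))
        - (1 / (ρ * α) - 1 / (α * (2*ρ+1)))) := by
    rw [integral_Ici_eq_integral_Ioi]
    rw [setIntegral_congr_fun measurableSet_Ioi
      (g := fun x : ℝ => α ^ (-(2*ρ-1)) * ((2 - exp (-(α * x))) ^ (2*ρ-1) * exp (-(2 * α * x))))
      (fun x hx => J_integrand_pos hα (le_of_lt hx))]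
    rw [integral_const_mul, integral_pos_side hα hρ]
  rw [hneg, hpos]
  have h1 : α ^ (-(2*ρ-1)) = α ^ (-(2*ρ)) * α := by
    rw [← Real.rpow_add_one hα.ne']; ring_nf
  have h2 : (2:ℝ) ^ (2*ρ+1) = 2 * (2:ℝ) ^ (2*ρ) := by
    rw [Real.rpow_add_one (by norm_num : (2:ℝ) ≠ 0)]; ring
  rw [h1, h2]
  have h2ρ1 : (2*ρ+1 : ℝ) ≠ 0 := by positivity
  field_simp
  ring


/-- closed-form evaluation of `R(g_ρ)` for every `ρ > 0`, and its
value at `ρ = cos²θ`. -/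
theorem R_of_g_rho_closed_form (α θ : ℝ) (hα : 0 < α) (hθ : θ ∈ Ioo 0 (π/2)) :
    (∀ ρ : ℝ, 0 < ρ →
      Rfun α θ (fun x => F α (x * tan θ) ^ ρ)
        = α ^ (-(2 * ρ)) * tan θ * (ρ - cot θ ^ 2) * ((2:ℝ) ^ (2 * ρ) - 1) / (2 * ρ + 1))
    ∧ Rfun α θ (fun x => F α (x * tan θ) ^ (cos θ ^ 2))
        = -(α ^ (-(2 * cos θ ^ 2)) * cos θ ^ 3 * ((2:ℝ) ^ (2 * cos θ ^ 2) - 1)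
            / (sin θ * (1 + 2 * cos θ ^ 2))) := by
  obtain ⟨hθ0, hθ1⟩ := hθ
  have hπ := pi_pos
  have hsin : 0 < sin θ := sin_pos_of_pos_of_lt_pi hθ0 (by linarith)
  have hcos : 0 < cos θ := cos_pos_of_mem_Ioo ⟨by linarith, hθ1⟩
  have ht : 0 < tan θ := tan_pos_of_pos_of_lt_pi_div_two hθ0 hθ1
  have hcot : cot θ = (tan θ)⁻¹ := by
    rw [cot_eq_cos_div_sin, tan_eq_sin_div_cos, inv_div]
  have main : ∀ ρ : ℝ, 0 < ρ →
      Rfun α θ (fun x => F α (x * tan θ) ^ ρ)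
        = α ^ (-(2 * ρ)) * tan θ * (ρ - cot θ ^ 2) * ((2:ℝ) ^ (2 * ρ) - 1) / (2 * ρ + 1) := by
    intro ρ hρ
    have hgderiv : ∀ x : ℝ, HasDerivAt (fun x => F α (x * tan θ) ^ ρ)
        (ρ * F α (x * tan θ) ^ (ρ-1) * (exp (-α * |x * tan θ|) * tan θ)) x := by
      intro x
      have h := ((F_hasDerivAt hα (x * tan θ)).comp x
        ((hasDerivAt_id x).mul_const (tan θ))).rpow_const (p := ρ)
        (Or.inl (F_pos hα (x * tan θ)).ne')
      simp only [Function.comp_def, id_eq] at h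
      convert h using 1
      ring
    have hintegrand : ∀ x : ℝ, deriv (fun x => F α (x * tan θ) ^ ρ) x *
        (deriv (fun x => F α (x * tan θ) ^ ρ) x * F α (x * tan θ) -
          F α (x * tan θ) ^ ρ * exp (-α * |x| * tan θ) * cot θ)
        = (ρ^2 * tan θ^2 - ρ) *
            ((fun u => F α u ^ (2*ρ-1) * exp (-(2*α) * |u|)) (x * tan θ)) := by
      intro x
      rw [(hgderiv x).deriv]
      simp only
      have habs : -α * |x| * tan θ = -α * |x * tan θ| := by
        rw [abs_mul, abs_of_pos ht]; ring
      rw [habs]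
      have hFpos := F_pos hα (x * tan θ)
      have h4 : tan θ * cot θ = 1 := by
        rw [hcot]; field_simp
      have expand : ρ * F α (x * tan θ) ^ (ρ-1) * (exp (-α * |x * tan θ|) * tan θ) *
          (ρ * F α (x * tan θ) ^ (ρ-1) * (exp (-α * |x * tan θ|) * tan θ) * F α (x * tan θ) -
            F α (x * tan θ) ^ ρ * exp (-α * |x * tan θ|) * cot θ)
          = ρ^2 * tan θ^2 *
              (F α (x * tan θ) ^ (ρ-1) * F α (x * tan θ) ^ (ρ-1) * F α (x * tan θ)) *
              (exp (-α * |x * tan θ|) * exp (-α * |x * tan θ|))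
            - (tan θ * cot θ) * ρ *
              (F α (x * tan θ) ^ (ρ-1) * F α (x * tan θ) ^ ρ) *
              (exp (-α * |x * tan θ|) * exp (-α * |x * tan θ|)) := by ring
      rw [expand, h4]
      have h1 : F α (x * tan θ) ^ (ρ-1) * F α (x * tan θ) ^ (ρ-1) * F α (x * tan θ)
          = F α (x * tan θ) ^ (2*ρ-1) := by
        rw [← Real.rpow_add hFpos, ← Real.rpow_add_one hFpos.ne']; ring_nf
      have h2 : F α (x * tan θ) ^ (ρ-1) * F α (x * tan θ) ^ ρ
          = F α (x * tan θ) ^ (2*ρ-1) := by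
        rw [← Real.rpow_add hFpos]; ring_nf
      have h3 : exp (-α * |x * tan θ|) * exp (-α * |x * tan θ|)
          = exp (-(2*α) * |x * tan θ|) := by
        rw [← exp_add]; ring_nf
      rw [h1, h2, h3]
      ring
    rw [Rfun]
    calc (∫ x : ℝ, deriv (fun x => F α (x * tan θ) ^ ρ) x *
          (deriv (fun x => F α (x * tan θ) ^ ρ) x * F α (x * tan θ) -
            (fun x => F α (x * tan θ) ^ ρ) x * exp (-α * |x| * tan θ) * cot θ))
        = ∫ x : ℝ, (ρ^2 * tan θ^2 - ρ) *
            ((fun u => F α u ^ (2*ρ-1) * exp (-(2*α) * |u|)) (x * tan θ)) := by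
          congr 1; funext x; exact hintegrand x
      _ = (ρ^2 * tan θ^2 - ρ) *
            ∫ x : ℝ, (fun u => F α u ^ (2*ρ-1) * exp (-(2*α) * |u|)) (x * tan θ) :=
          integral_const_mul _ _
      _ = (ρ^2 * tan θ^2 - ρ) * (|( tan θ)⁻¹| •
            ∫ u : ℝ, F α u ^ (2*ρ-1) * exp (-(2*α) * |u|)) := by
          rw [MeasureTheory.Measure.integral_comp_mul_right
            (fun u => F α u ^ (2*ρ-1) * exp (-(2*α) * |u|)) (tan θ)]
      _ = α ^ (-(2 * ρ)) * tan θ * (ρ - cot θ ^ 2) * ((2:ℝ) ^ (2 * ρ) - 1) / (2 * ρ + 1) := by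
          rw [J_eval hα hρ, abs_of_pos (inv_pos.mpr ht), smul_eq_mul, hcot]
          have h2ρ1 : (2*ρ+1 : ℝ) ≠ 0 := by positivity
          field_simp
  refine ⟨main, ?_⟩
  rw [main _ (by positivity)]
  have key : tan θ * (cos θ^2 - cot θ^2) = -(cos θ^3) / sin θ := by
    rw [tan_eq_sin_div_cos, cot_eq_cos_div_sin]
    have h := sin_sq_add_cos_sq θ
    field_simp
    linear_combination h
  have h1 : α ^ (-(2 * cos θ ^ 2)) * tan θ * (cos θ ^ 2 - cot θ ^ 2) *
        ((2:ℝ) ^ (2 * cos θ ^ 2) - 1) / (2 * cos θ ^ 2 + 1)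
      = (tan θ * (cos θ ^ 2 - cot θ ^ 2)) *
        (α ^ (-(2 * cos θ ^ 2)) * ((2:ℝ) ^ (2 * cos θ ^ 2) - 1) / (2 * cos θ ^ 2 + 1)) := by
    ring
  rw [h1, key]
  have hd1 : (2 * cos θ ^ 2 + 1 : ℝ) ≠ 0 := by positivity
  have hd2 : (1 + 2 * cos θ ^ 2 : ℝ) ≠ 0 := by positivity
  field_simp
  ring
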